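/- arXiv:1811.07722 — 4 statements merged into one kernel-verified Lean document; each statement's English description precedes it below -/
import Mathlib

section
/- In a quantum Mealy machine M = (H_in, H_s, U, M), two states ρ₁, ρ₂ on H_s are equivalent on a set B of input density operators if and only if they are equivalent on span B: for all input sequences π with entries in B (resp. in span B) and all output sequences a, tr(E_{a|π}(ρ₁)) = tr(E_{a|π}(ρ₂)). -/
open Matrix Kronecker ComplexOrder

/-- Partial trace over the first (input) factor. -/
noncomputable def ptraceIn {α β : Type*} [Fintype α]
    (A : Matrix (α × β) (α × β) ℂ) : Matrix β β ℂ :=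
  fun s t => ∑ i, A (i, s) (i, t)

/-- One-step super-operator `E_{a|σ}` of a quantum Mealy machine `(H_in, H_s, U, M)`
with a general (density-operator) input `σ`:
`E_{a|σ}(ρ) = tr_{H_in}[(M_a ⊗ I) U (σ ⊗ ρ) U† (M_a† ⊗ I)]`. -/
noncomputable def stepD {α β O : Type*} [Fintype α] [Fintype β] [DecidableEq β]
    (U : Matrix (α × β) (α × β) ℂ) (M : O → Matrix α α ℂ)
    (σ : Matrix α α ℂ) (a : O) (ρ : Matrix β β ℂ) : Matrix β β ℂ :=
  ptraceIn ((M a ⊗ₖ (1 : Matrix β β ℂ)) * U * (σ ⊗ₖ ρ) * Uᴴ *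
    ((M a)ᴴ ⊗ₖ (1 : Matrix β β ℂ)))

/-- One-step super-operator `E_{a,φ}` with a pure input state `|φ⟩`. -/
noncomputable def stepP {α β O : Type*} [Fintype α] [Fintype β] [DecidableEq β]
    (U : Matrix (α × β) (α × β) ℂ) (M : O → Matrix α α ℂ)
    (φ : α → ℂ) (a : O) (ρ : Matrix β β ℂ) : Matrix β β ℂ :=
  stepD U M (vecMulVec φ (star φ)) a ρ

/-- `E_{a|π}` for an input sequence of density operators paired with outcomes. -/
noncomputable def runD {α β O : Type*} [Fintype α] [Fintype β] [DecidableEq β]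
    (U : Matrix (α × β) (α × β) ℂ) (M : O → Matrix α α ℂ)
    (l : List (Matrix α α ℂ × O)) (ρ : Matrix β β ℂ) : Matrix β β ℂ :=
  l.foldl (fun acc p => stepD U M p.1 p.2 acc) ρ

/-- `E_{a|π}` for an input sequence of pure states paired with outcomes. -/
noncomputable def runP {α β O : Type*} [Fintype α] [Fintype β] [DecidableEq β]
    (U : Matrix (α × β) (α × β) ℂ) (M : O → Matrix α α ℂ)
    (l : List ((α → ℂ) × O)) (ρ : Matrix β β ℂ) : Matrix β β ℂ :=
  l.foldl (fun acc p => stepP U M p.1 p.2 acc) ρ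


section Aux

variable {α β O : Type*} [Fintype α] [Fintype β] [DecidableEq β]

lemma ptraceIn_add (A B : Matrix (α × β) (α × β) ℂ) :
    ptraceIn (A + B) = ptraceIn A + ptraceIn B := by
  ext s t; simp [ptraceIn, Finset.sum_add_distrib]

lemma ptraceIn_smul (c : ℂ) (A : Matrix (α × β) (α × β) ℂ) :
    ptraceIn (c • A) = c • ptraceIn A := by
  ext s t; simp [ptraceIn, Finset.mul_sum]

lemma ptraceIn_zero : ptraceIn (0 : Matrix (α × β) (α × β) ℂ) = 0 := by
  ext s t; simp [ptraceIn]

variable (U : Matrix (α × β) (α × β) ℂ) (M : O → Matrix α α ℂ)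

lemma stepD_add_left (σ τ : Matrix α α ℂ) (a : O) (ρ : Matrix β β ℂ) :
    stepD U M (σ + τ) a ρ = stepD U M σ a ρ + stepD U M τ a ρ := by
  simp [stepD, Matrix.add_kronecker, Matrix.mul_add, Matrix.add_mul, ptraceIn_add]

lemma stepD_smul_left (c : ℂ) (σ : Matrix α α ℂ) (a : O) (ρ : Matrix β β ℂ) :
    stepD U M (c • σ) a ρ = c • stepD U M σ a ρ := by
  simp [stepD, Matrix.smul_kronecker, Matrix.mul_smul, Matrix.smul_mul, ptraceIn_smul]

lemma stepD_zero_left (a : O) (ρ : Matrix β β ℂ) :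
    stepD U M (0 : Matrix α α ℂ) a ρ = 0 := by
  simp [stepD, Matrix.zero_kronecker, Matrix.mul_zero, Matrix.zero_mul, ptraceIn_zero]

lemma stepD_add_right (σ : Matrix α α ℂ) (a : O) (ρ ρ' : Matrix β β ℂ) :
    stepD U M σ a (ρ + ρ') = stepD U M σ a ρ + stepD U M σ a ρ' := by
  simp [stepD, Matrix.kronecker_add, Matrix.mul_add, Matrix.add_mul, ptraceIn_add]

lemma stepD_smul_right (σ : Matrix α α ℂ) (a : O) (c : ℂ) (ρ : Matrix β β ℂ) :
    stepD U M σ a (c • ρ) = c • stepD U M σ a ρ := by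
  simp [stepD, Matrix.kronecker_smul, Matrix.mul_smul, Matrix.smul_mul, ptraceIn_smul]

lemma stepD_zero_right (σ : Matrix α α ℂ) (a : O) :
    stepD U M σ a (0 : Matrix β β ℂ) = 0 := by
  simp [stepD, Matrix.kronecker_zero, Matrix.mul_zero, Matrix.zero_mul, ptraceIn_zero]

lemma runD_cons (p : Matrix α α ℂ × O) (l : List (Matrix α α ℂ × O)) (ρ : Matrix β β ℂ) :
    runD U M (p :: l) ρ = runD U M l (stepD U M p.1 p.2 ρ) := rfl

lemma runD_add (l : List (Matrix α α ℂ × O)) (ρ ρ' : Matrix β β ℂ) :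
    runD U M l (ρ + ρ') = runD U M l ρ + runD U M l ρ' := by
  induction l generalizing ρ ρ' with
  | nil => rfl
  | cons p l ih => rw [runD_cons, stepD_add_right, ih]; rfl

lemma runD_smul (l : List (Matrix α α ℂ × O)) (c : ℂ) (ρ : Matrix β β ℂ) :
    runD U M l (c • ρ) = c • runD U M l ρ := by
  induction l generalizing ρ with
  | nil => rfl
  | cons p l ih => rw [runD_cons, stepD_smul_right, ih]; rfl

lemma runD_zero (l : List (Matrix α α ℂ × O)) :
    runD U M l (0 : Matrix β β ℂ) = 0 := by
  induction l with
  | nil => rfl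
  | cons p l ih => rw [runD_cons, stepD_zero_right]; exact ih

lemma key_span (B : Set (Matrix α α ℂ)) :
    ∀ l : List (Matrix α α ℂ × O), (∀ p ∈ l, p.1 ∈ Submodule.span ℂ B) →
    ∀ ρ ρ' : Matrix β β ℂ,
    (∀ l' : List (Matrix α α ℂ × O), (∀ p ∈ l', p.1 ∈ B) →
      (runD U M l' ρ).trace = (runD U M l' ρ').trace) →
    (runD U M l ρ).trace = (runD U M l ρ').trace := by
  intro l
  induction l with
  | nil => intro _ ρ ρ' h; exact h [] (by simp)
  | cons p l ih =>
    intro hmem ρ ρ' h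
    obtain ⟨σ, a⟩ := p
    have hσ : σ ∈ Submodule.span ℂ B := hmem (σ, a) List.mem_cons_self
    have hrest : ∀ q ∈ l, q.1 ∈ Submodule.span ℂ B :=
      fun q hq => hmem q (List.mem_cons_of_mem _ hq)
    clear hmem
    rw [runD_cons, runD_cons]
    induction hσ using Submodule.span_induction with
    | mem τ hτ =>
      refine ih hrest _ _ ?_
      intro l' hl'
      have := h ((τ, a) :: l') ?_
      · rwa [runD_cons, runD_cons] at this
      · intro q hq
        rcases List.mem_cons.mp hq with h1 | h2
        · rw [h1]; exact hτ
        · exact hl' q h2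
    | zero => simp only [stepD_zero_left, runD_zero]
    | add x y _ _ hx hy =>
      rw [stepD_add_left, stepD_add_left, runD_add, runD_add,
        Matrix.trace_add, Matrix.trace_add, hx, hy]
    | smul c x _ hx =>
      rw [stepD_smul_left, stepD_smul_left, runD_smul, runD_smul,
        Matrix.trace_smul, Matrix.trace_smul, hx]

end Aux

/-- Two states of a quantum Mealy machine are equivalent on a finite set `B` of input
density operators iff they are equivalent on `span B`. -/
theorem equiv_on_B_iff_equiv_on_span (di ds : ℕ) (O : Type) [Fintype O]
    (U : Matrix (Fin di × Fin ds) (Fin di × Fin ds) ℂ)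
    (hU : U ∈ Matrix.unitaryGroup (Fin di × Fin ds) ℂ)
    (M : O → Matrix (Fin di) (Fin di) ℂ) (hM : ∑ a, (M a)ᴴ * M a = 1)
    (ρ₁ ρ₂ : Matrix (Fin ds) (Fin ds) ℂ)
    (hρ₁ : ρ₁.PosSemidef) (ht₁ : ρ₁.trace = 1)
    (hρ₂ : ρ₂.PosSemidef) (ht₂ : ρ₂.trace = 1)
    (B : Set (Matrix (Fin di) (Fin di) ℂ)) (hBfin : B.Finite)
    (hB : ∀ σ ∈ B, σ.PosSemidef ∧ σ.trace = 1) :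
    (∀ l : List (Matrix (Fin di) (Fin di) ℂ × O), (∀ p ∈ l, p.1 ∈ B) →
        (runD U M l ρ₁).trace = (runD U M l ρ₂).trace) ↔
    (∀ l : List (Matrix (Fin di) (Fin di) ℂ × O),
        (∀ p ∈ l, p.1 ∈ Submodule.span ℂ B) →
        (runD U M l ρ₁).trace = (runD U M l ρ₂).trace) := by
  constructor
  · intro h l hl
    exact key_span U M B l hl ρ₁ ρ₂ h
  · intro h l hl
    exact h l fun p hp => Submodule.subset_span (hl p hp)
end

section
/- In a quantum Mealy machine with state space H_s of dimension d, two initial states ρ₁ and ρ₂ are equivalent (produce identical output distributions for all input sequences) if and only if they are (d²−1)-equivalent (produce identical output distributions for all input sequences of length at most d²−1). -/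
open Matrix Kronecker ComplexOrder

namespace QMealyAux

variable {α β O : Type*} [Fintype α] [Fintype β] [DecidableEq β]

lemma ptraceIn_add (A B : Matrix (α × β) (α × β) ℂ) :
    ptraceIn (A + B) = ptraceIn A + ptraceIn B := by
  funext s t
  simp [ptraceIn, Finset.sum_add_distrib]

lemma ptraceIn_smul (c : ℂ) (A : Matrix (α × β) (α × β) ℂ) :
    ptraceIn (c • A) = c • ptraceIn A := by
  funext s t
  simp [ptraceIn, Finset.mul_sum]

/-- `stepP` as a linear map in `ρ`. -/
noncomputable def stepL (U : Matrix (α × β) (α × β) ℂ) (M : O → Matrix α α ℂ)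
    (p : (α → ℂ) × O) : Matrix β β ℂ →ₗ[ℂ] Matrix β β ℂ where
  toFun := stepP U M p.1 p.2
  map_add' ρ ρ' := by
    simp only [stepP, stepD, Matrix.kronecker_add, mul_add, add_mul, ptraceIn_add]
  map_smul' c ρ := by
    simp only [stepP, stepD, Matrix.kronecker_smul, mul_smul_comm, smul_mul_assoc,
      ptraceIn_smul, RingHom.id_apply]

/-- `runP` as a linear map in `ρ`. -/
noncomputable def runL (U : Matrix (α × β) (α × β) ℂ) (M : O → Matrix α α ℂ)
    (l : List ((α → ℂ) × O)) : Matrix β β ℂ →ₗ[ℂ] Matrix β β ℂ :=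
  l.foldl (fun A p => (stepL U M p).comp A) LinearMap.id

lemma foldl_comp (U : Matrix (α × β) (α × β) ℂ) (M : O → Matrix α α ℂ)
    (l : List ((α → ℂ) × O)) (A : Matrix β β ℂ →ₗ[ℂ] Matrix β β ℂ) :
    l.foldl (fun A p => (stepL U M p).comp A) A = (runL U M l).comp A := by
  induction l generalizing A with
  | nil => simp [runL]
  | cons p l ih =>
      rw [List.foldl_cons, ih]
      have h2 : runL U M (p :: l) = (runL U M l).comp ((stepL U M p).comp LinearMap.id) :=
        ih ((stepL U M p).comp LinearMap.id)
      rw [h2, LinearMap.comp_id, LinearMap.comp_assoc]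

lemma runL_cons (U : Matrix (α × β) (α × β) ℂ) (M : O → Matrix α α ℂ)
    (p : (α → ℂ) × O) (l : List ((α → ℂ) × O)) :
    runL U M (p :: l) = (runL U M l).comp (stepL U M p) := by
  have h2 : runL U M (p :: l) = (runL U M l).comp ((stepL U M p).comp LinearMap.id) :=
    foldl_comp U M l ((stepL U M p).comp LinearMap.id)
  rw [h2, LinearMap.comp_id]

lemma runP_eq (U : Matrix (α × β) (α × β) ℂ) (M : O → Matrix α α ℂ)
    (l : List ((α → ℂ) × O)) (ρ : Matrix β β ℂ) :
    runP U M l ρ = runL U M l ρ := by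
  induction l generalizing ρ with
  | nil => rfl
  | cons p l ih =>
      show runP U M l (stepP U M p.1 p.2 ρ) = _
      rw [ih, runL_cons]
      rfl

/-- The linear functional `ρ ↦ tr (E_{a|π} ρ)`. -/
noncomputable def Fl (U : Matrix (α × β) (α × β) ℂ) (M : O → Matrix α α ℂ)
    (l : List ((α → ℂ) × O)) : Matrix β β ℂ →ₗ[ℂ] ℂ :=
  (Matrix.traceLinearMap β ℂ ℂ).comp (runL U M l)

lemma Fl_cons (U : Matrix (α × β) (α × β) ℂ) (M : O → Matrix α α ℂ)
    (p : (α → ℂ) × O) (l : List ((α → ℂ) × O)) :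
    Fl U M (p :: l) = (Fl U M l).comp (stepL U M p) := by
  rw [Fl, runL_cons, Fl, LinearMap.comp_assoc]

lemma Fl_apply_sub (U : Matrix (α × β) (α × β) ℂ) (M : O → Matrix α α ℂ)
    (l : List ((α → ℂ) × O)) (ρ₁ ρ₂ : Matrix β β ℂ) :
    Fl U M l (ρ₁ - ρ₂) = (runP U M l ρ₁).trace - (runP U M l ρ₂).trace := by
  simp [Fl, map_sub, runP_eq]

/-- The span of the functionals coming from valid sequences of length at most `n`. -/
noncomputable def Vk (U : Matrix (α × β) (α × β) ℂ) (M : O → Matrix α α ℂ) (n : ℕ) :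
    Submodule ℂ (Matrix β β ℂ →ₗ[ℂ] ℂ) :=
  Submodule.span ℂ {f | ∃ l : List ((α → ℂ) × O),
    (∀ p ∈ l, ∑ i, ‖p.1 i‖ ^ 2 = 1) ∧ l.length ≤ n ∧ f = Fl U M l}

lemma mem_Vk (U : Matrix (α × β) (α × β) ℂ) (M : O → Matrix α α ℂ)
    {l : List ((α → ℂ) × O)} (hl : ∀ p ∈ l, ∑ i, ‖p.1 i‖ ^ 2 = 1)
    {n : ℕ} (hn : l.length ≤ n) : Fl U M l ∈ Vk U M n :=
  Submodule.subset_span ⟨l, hl, hn, rfl⟩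

lemma Vk_mono (U : Matrix (α × β) (α × β) ℂ) (M : O → Matrix α α ℂ)
    {m n : ℕ} (h : m ≤ n) : Vk U M m ≤ Vk U M n :=
  Submodule.span_mono fun f ⟨l, h1, h2, h3⟩ => ⟨l, h1, h2.trans h, h3⟩

lemma map_lcomp_le (U : Matrix (α × β) (α × β) ℂ) (M : O → Matrix α α ℂ)
    {p : (α → ℂ) × O} (hp : ∑ i, ‖p.1 i‖ ^ 2 = 1) (n : ℕ) :
    (Vk U M n).map (LinearMap.lcomp ℂ ℂ (stepL U M p)) ≤ Vk U M (n + 1) := by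
  rw [Vk, Submodule.map_span, Submodule.span_le]
  rintro f ⟨g, ⟨l, h1, h2, rfl⟩, rfl⟩
  refine Submodule.subset_span ⟨p :: l, ?_, by simpa using h2, (Fl_cons U M p l).symm⟩
  intro q hq
  rcases List.mem_cons.mp hq with h | h
  · exact h ▸ hp
  · exact h1 q h

lemma step_down (U : Matrix (α × β) (α × β) ℂ) (M : O → Matrix α α ℂ) (n : ℕ)
    (h : Vk U M (n + 1) ≤ Vk U M n) : Vk U M (n + 2) ≤ Vk U M (n + 1) := by
  rw [Vk, Submodule.span_le]
  rintro f ⟨l, h1, h2, rfl⟩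
  cases l with
  | nil => exact mem_Vk U M h1 (by simp)
  | cons p l' =>
      have hl' : Fl U M l' ∈ Vk U M n :=
        h (mem_Vk U M (fun q hq => h1 q (List.mem_cons_of_mem p hq))
          (by simpa using Nat.succ_le_succ_iff.mp h2))
      rw [Fl_cons]
      exact map_lcomp_le U M (h1 p (List.mem_cons_self (a := p) (l := l'))) n
        (Submodule.mem_map_of_mem hl')

lemma stab (U : Matrix (α × β) (α × β) ℂ) (M : O → Matrix α α ℂ) (k : ℕ)
    (h : Vk U M (k + 1) ≤ Vk U M k) (m : ℕ) : Vk U M (k + m) ≤ Vk U M k := by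
  induction m with
  | zero => exact le_rfl
  | succ m ih =>
      have : ∀ j, Vk U M (k + 1 + j) ≤ Vk U M (k + j) := by
        intro j
        induction j with
        | zero => simpa using h
        | succ j ihj =>
            have := step_down U M (k + j) (by
              simpa [Nat.add_assoc, Nat.add_comm 1 j] using ihj)
            simpa [Nat.add_assoc, Nat.add_comm 1 (j+1), Nat.add_comm 1 j] using this
      calc Vk U M (k + (m + 1)) = Vk U M (k + 1 + m) := by ring_nf
        _ ≤ Vk U M (k + m) := this m
        _ ≤ Vk U M k := ih

end QMealyAux

open QMealyAux in
/-- Two initial states of a quantum Mealy machine with `d`-dimensional state space are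
equivalent iff they are `(d² − 1)`-equivalent. -/
theorem equiv_iff_dsq_sub_one_equiv (di ds : ℕ) (O : Type) [Fintype O]
    (U : Matrix (Fin di × Fin ds) (Fin di × Fin ds) ℂ)
    (hU : U ∈ Matrix.unitaryGroup (Fin di × Fin ds) ℂ)
    (M : O → Matrix (Fin di) (Fin di) ℂ) (hM : ∑ a, (M a)ᴴ * M a = 1)
    (ρ₁ ρ₂ : Matrix (Fin ds) (Fin ds) ℂ)
    (hρ₁ : ρ₁.PosSemidef) (ht₁ : ρ₁.trace = 1)
    (hρ₂ : ρ₂.PosSemidef) (ht₂ : ρ₂.trace = 1) :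
    (∀ l : List ((Fin di → ℂ) × O), (∀ p ∈ l, ∑ i, ‖p.1 i‖ ^ 2 = 1) →
        (runP U M l ρ₁).trace = (runP U M l ρ₂).trace) ↔
    (∀ l : List ((Fin di → ℂ) × O), (∀ p ∈ l, ∑ i, ‖p.1 i‖ ^ 2 = 1) →
        l.length ≤ ds ^ 2 - 1 →
        (runP U M l ρ₁).trace = (runP U M l ρ₂).trace) := by
  constructor
  · intro h l hl _
    exact h l hl
  · intro h l hl
    rcases Nat.eq_zero_or_pos ds with hds | hds
    · subst hds
      simp [Matrix.trace]
    -- The set of functionals vanishing on `D := ρ₁ - ρ₂`.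
    have hVW : Vk U M (ds ^ 2 - 1) ≤
        LinearMap.ker (LinearMap.applyₗ (M₂ := ℂ) (ρ₁ - ρ₂)) := by
      rw [Vk, Submodule.span_le]
      rintro f ⟨l', h1, h2, rfl⟩
      have hz := h l' h1 h2
      simp only [SetLike.mem_coe, LinearMap.mem_ker]
      show Fl U M l' (ρ₁ - ρ₂) = 0
      rw [Fl_apply_sub U M l' ρ₁ ρ₂, hz, sub_self]
    -- Find a stabilization point `k ≤ ds² - 1`.
    have hex : ∃ k ≤ ds ^ 2 - 1, Vk U M (k + 1) ≤ Vk U M k := by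
      by_contra hc
      push_neg at hc
      have hlt : ∀ k ≤ ds ^ 2 - 1, Vk U M k < Vk U M (k + 1) := fun k hk =>
        lt_of_le_of_ne (Vk_mono U M (Nat.le_succ k))
          (fun he => hc k hk (he ▸ le_rfl))
      have hrank : ∀ k ≤ ds ^ 2, k + 1 ≤ Module.finrank ℂ (Vk U M k) := by
        intro k
        induction k with
        | zero =>
            intro _
            have hne : Vk U M 0 ≠ ⊥ := by
              intro hbot
              have hmem : Fl U M ([] : List ((Fin di → ℂ) × O)) ∈ Vk U M 0 :=
                mem_Vk U M (by simp) (by simp)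
              rw [hbot, Submodule.mem_bot] at hmem
              have hc1 := congrArg (fun f => f (1 : Matrix (Fin ds) (Fin ds) ℂ)) hmem
              simp [Fl, runL, Matrix.trace_one] at hc1
              have : ds = 0 := by exact_mod_cast hc1
              omega
            have : Module.finrank ℂ (Vk U M 0) ≠ 0 := by
              intro h0
              exact hne (Submodule.finrank_eq_zero.mp h0)
            omega
        | succ k ih =>
            intro hk
            have hk' : k ≤ ds ^ 2 - 1 := by omega
            have h1 : k + 1 ≤ Module.finrank ℂ (Vk U M k) := ih (by omega)
            have h2 := Submodule.finrank_lt_finrank_of_lt (hlt k hk')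
            omega
      have hbig := hrank (ds ^ 2) le_rfl
      have hle : Module.finrank ℂ (Vk U M (ds ^ 2)) ≤
          Module.finrank ℂ (Matrix (Fin ds) (Fin ds) ℂ →ₗ[ℂ] ℂ) :=
        Submodule.finrank_le _
      have hdual : Module.finrank ℂ (Matrix (Fin ds) (Fin ds) ℂ →ₗ[ℂ] ℂ) = ds ^ 2 := by
        have hdd : Module.finrank ℂ (Module.Dual ℂ (Matrix (Fin ds) (Fin ds) ℂ)) = ds ^ 2 := by
          rw [Subspace.dual_finrank_eq, Module.finrank_matrix]
          simp [sq]
        exact hdd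
      omega
    obtain ⟨k, hk, hstab⟩ := hex
    have hall : ∀ n, Vk U M n ≤ Vk U M k := by
      intro n
      rcases le_or_gt n k with hnk | hnk
      · exact Vk_mono U M hnk
      · have : n = k + (n - k) := by omega
        rw [this]
        exact stab U M k hstab (n - k)
    have hmem := hVW (((hall l.length).trans (Vk_mono U M hk)) (mem_Vk U M hl le_rfl))
    have hz : Fl U M l (ρ₁ - ρ₂) = 0 := hmem
    rw [Fl_apply_sub U M l ρ₁ ρ₂] at hz
    exact sub_eq_zero.mp hz
end

section
/- Two quantum Mealy machines M₁ and M₂ with the same input space and output set, with initial states ρ₁ and ρ₂ respectively, are functionally equivalent if and only if the states ρ₁ ⊕ 0 and 0 ⊕ ρ₂ are equivalent in the direct-sum machine M₁ ⊕ M₂. -/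
open Matrix Kronecker ComplexOrder

/-- The direct sum `U₁ ⊕ U₂`, viewed as an operator on `H_in ⊗ (H_s⁽¹⁾ ⊕ H_s⁽²⁾)` via the
isomorphism `H_in ⊗ (H₁ ⊕ H₂) ≅ (H_in ⊗ H₁) ⊕ (H_in ⊗ H₂)`. -/
noncomputable def Usum {α β₁ β₂ : Type*}
    (U₁ : Matrix (α × β₁) (α × β₁) ℂ) (U₂ : Matrix (α × β₂) (α × β₂) ℂ) :
    Matrix (α × (β₁ ⊕ β₂)) (α × (β₁ ⊕ β₂)) ℂ :=
  Matrix.reindex (Equiv.prodSumDistrib α β₁ β₂).symm (Equiv.prodSumDistrib α β₁ β₂).symm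
    (Matrix.fromBlocks U₁ 0 0 U₂)

section Aux

variable {α β₁ β₂ O : Type*} [Fintype α] [Fintype β₁] [Fintype β₂]
  [DecidableEq β₁] [DecidableEq β₂]

/-- Reindexing by `prodSumDistrib`. -/
noncomputable def rdx (α β₁ β₂ : Type*) :
    Matrix ((α × β₁) ⊕ (α × β₂)) ((α × β₁) ⊕ (α × β₂)) ℂ →
      Matrix (α × (β₁ ⊕ β₂)) (α × (β₁ ⊕ β₂)) ℂ :=
  fun X => Matrix.reindex (Equiv.prodSumDistrib α β₁ β₂).symm
    (Equiv.prodSumDistrib α β₁ β₂).symm X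

lemma rdx_mul (X Y : Matrix ((α × β₁) ⊕ (α × β₂)) ((α × β₁) ⊕ (α × β₂)) ℂ) :
    rdx α β₁ β₂ X * rdx α β₁ β₂ Y = rdx α β₁ β₂ (X * Y) := by
  simp [rdx, Matrix.reindex_apply, Matrix.submatrix_mul_equiv]

lemma rdx_conjTranspose (X : Matrix ((α × β₁) ⊕ (α × β₂)) ((α × β₁) ⊕ (α × β₂)) ℂ) :
    (rdx α β₁ β₂ X)ᴴ = rdx α β₁ β₂ Xᴴ := by
  simp [rdx]

lemma kron_fromBlocks (A : Matrix α α ℂ) (B : Matrix β₁ β₁ ℂ) (C : Matrix β₂ β₂ ℂ) :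
    A ⊗ₖ (Matrix.fromBlocks B 0 0 C) =
      rdx α β₁ β₂ (Matrix.fromBlocks (A ⊗ₖ B) 0 0 (A ⊗ₖ C)) := by
  ext ⟨i, s⟩ ⟨j, t⟩
  cases s <;> cases t <;>
    simp [rdx, Matrix.fromBlocks, Matrix.kroneckerMap_apply, Matrix.submatrix_apply,
      Equiv.prodSumDistrib]

lemma ptraceIn_rdx (X : Matrix (α × β₁) (α × β₁) ℂ) (Y : Matrix (α × β₂) (α × β₂) ℂ) :
    ptraceIn (rdx α β₁ β₂ (Matrix.fromBlocks X 0 0 Y)) =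
      Matrix.fromBlocks (ptraceIn X) 0 0 (ptraceIn Y) := by
  ext s t
  cases s <;> cases t <;>
    simp [ptraceIn, rdx, Matrix.fromBlocks, Matrix.submatrix_apply, Equiv.prodSumDistrib]

lemma stepD_block (U₁ : Matrix (α × β₁) (α × β₁) ℂ) (U₂ : Matrix (α × β₂) (α × β₂) ℂ)
    (M : O → Matrix α α ℂ) (σ : Matrix α α ℂ) (a : O)
    (ρ : Matrix β₁ β₁ ℂ) (ρ' : Matrix β₂ β₂ ℂ) :
    stepD (Usum U₁ U₂) M σ a (Matrix.fromBlocks ρ 0 0 ρ') =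
      Matrix.fromBlocks (stepD U₁ M σ a ρ) 0 0 (stepD U₂ M σ a ρ') := by
  have hone : (1 : Matrix (β₁ ⊕ β₂) (β₁ ⊕ β₂) ℂ) = Matrix.fromBlocks 1 0 0 1 :=
    (Matrix.fromBlocks_one).symm
  have hU : Usum U₁ U₂ = rdx α β₁ β₂ (Matrix.fromBlocks U₁ 0 0 U₂) := rfl
  unfold stepD
  rw [hone, hU, kron_fromBlocks, kron_fromBlocks, kron_fromBlocks,
    rdx_conjTranspose, rdx_mul, rdx_mul, rdx_mul, rdx_mul,
    Matrix.fromBlocks_conjTranspose, Matrix.fromBlocks_multiply,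
    Matrix.fromBlocks_multiply, Matrix.fromBlocks_multiply, Matrix.fromBlocks_multiply]
  simp [ptraceIn_rdx]

lemma stepD_zero (U : Matrix (α × β₁) (α × β₁) ℂ) (M : O → Matrix α α ℂ)
    (σ : Matrix α α ℂ) (a : O) :
    stepD U M σ a (0 : Matrix β₁ β₁ ℂ) = 0 := by
  unfold stepD
  have : σ ⊗ₖ (0 : Matrix β₁ β₁ ℂ) = 0 := Matrix.kronecker_zero σ
  rw [this]
  simp only [Matrix.mul_zero, Matrix.zero_mul]
  ext s t
  simp [ptraceIn]

lemma trace_fromBlocks' (A : Matrix β₁ β₁ ℂ) (B : Matrix β₂ β₂ ℂ) :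
    (Matrix.fromBlocks A 0 0 B).trace = A.trace + B.trace := by
  simp [Matrix.trace, Fintype.sum_sum_type, Matrix.diag, Matrix.fromBlocks]

lemma runP_block (U₁ : Matrix (α × β₁) (α × β₁) ℂ) (U₂ : Matrix (α × β₂) (α × β₂) ℂ)
    (M : O → Matrix α α ℂ) (l : List ((α → ℂ) × O))
    (ρ : Matrix β₁ β₁ ℂ) (ρ' : Matrix β₂ β₂ ℂ) :
    runP (Usum U₁ U₂) M l (Matrix.fromBlocks ρ 0 0 ρ') =
      Matrix.fromBlocks (runP U₁ M l ρ) 0 0 (runP U₂ M l ρ') := by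
  induction l generalizing ρ ρ' with
  | nil => rfl
  | cons p l ih =>
      simp only [runP, List.foldl_cons] at *
      rw [show stepP (Usum U₁ U₂) M p.1 p.2 (Matrix.fromBlocks ρ 0 0 ρ') =
        Matrix.fromBlocks (stepP U₁ M p.1 p.2 ρ) 0 0 (stepP U₂ M p.1 p.2 ρ') from
        stepD_block U₁ U₂ M _ p.2 ρ ρ']
      exact ih _ _

lemma runP_zero (U : Matrix (α × β₁) (α × β₁) ℂ) (M : O → Matrix α α ℂ)
    (l : List ((α → ℂ) × O)) :
    runP U M l (0 : Matrix β₁ β₁ ℂ) = 0 := by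
  induction l with
  | nil => rfl
  | cons p l ih =>
      simp only [runP, List.foldl_cons] at *
      rw [show stepP U M p.1 p.2 (0 : Matrix β₁ β₁ ℂ) = 0 from stepD_zero U M _ p.2]
      exact ih

end Aux

/-- Two quantum Mealy machines with shared input space, measurement and output set are
functionally equivalent with initial states `ρ₁`, `ρ₂` iff the states `ρ₁ ⊕ 0` and
`0 ⊕ ρ₂` are equivalent in the direct-sum machine `M₁ ⊕ M₂`. -/
theorem equiv_iff_equiv_in_sum_machine (di d₁ d₂ : ℕ) (O : Type) [Fintype O]
    (U₁ : Matrix (Fin di × Fin d₁) (Fin di × Fin d₁) ℂ)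
    (U₂ : Matrix (Fin di × Fin d₂) (Fin di × Fin d₂) ℂ)
    (hU₁ : U₁ ∈ Matrix.unitaryGroup (Fin di × Fin d₁) ℂ)
    (hU₂ : U₂ ∈ Matrix.unitaryGroup (Fin di × Fin d₂) ℂ)
    (M : O → Matrix (Fin di) (Fin di) ℂ) (hM : ∑ a, (M a)ᴴ * M a = 1)
    (ρ₁ : Matrix (Fin d₁) (Fin d₁) ℂ) (ρ₂ : Matrix (Fin d₂) (Fin d₂) ℂ)
    (hρ₁ : ρ₁.PosSemidef) (ht₁ : ρ₁.trace = 1)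
    (hρ₂ : ρ₂.PosSemidef) (ht₂ : ρ₂.trace = 1) :
    (∀ l : List ((Fin di → ℂ) × O), (∀ p ∈ l, ∑ i, ‖p.1 i‖ ^ 2 = 1) →
        (runP U₁ M l ρ₁).trace = (runP U₂ M l ρ₂).trace) ↔
    (∀ l : List ((Fin di → ℂ) × O), (∀ p ∈ l, ∑ i, ‖p.1 i‖ ^ 2 = 1) →
        (runP (Usum U₁ U₂) M l (Matrix.fromBlocks ρ₁ 0 0 0)).trace =
        (runP (Usum U₁ U₂) M l (Matrix.fromBlocks 0 0 0 ρ₂)).trace) := by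
  have key : ∀ l : List ((Fin di → ℂ) × O),
      (runP (Usum U₁ U₂) M l (Matrix.fromBlocks ρ₁ 0 0 0)).trace =
        (runP U₁ M l ρ₁).trace ∧
      (runP (Usum U₁ U₂) M l (Matrix.fromBlocks 0 0 0 ρ₂)).trace =
        (runP U₂ M l ρ₂).trace := by
    intro l
    constructor
    · rw [runP_block, trace_fromBlocks', runP_zero]
      simp
    · rw [runP_block, trace_fromBlocks', runP_zero]
      simp
  constructor
  · intro h l hl
    rw [(key l).1, (key l).2]; exact h l hl
  · intro h l hl
    have := h l hl
    rwa [(key l).1, (key l).2] at this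
end

section
/- Let M₁, M₂ be quantum Mealy machines with state space dimensions d₁, d₂, shared input space and outputs. Then (M₁,ρ₁) ~ (M₂,ρ₂) (full equivalence) if and only if (M₁,ρ₁) ~_{d₁²+d₂²−1} (M₂,ρ₂) (equivalence on all input sequences of length at most d₁²+d₂²−1). -/
open Matrix Kronecker ComplexOrder

open Module

theorem key_stab {K W : Type*} [Field K] [AddCommGroup W] [Module K W]
    [FiniteDimensional K W] {P : Type*} (L : P → W →ₗ[K] W) (Q : P → Prop)
    (x₀ : W) (hx₀ : x₀ ≠ 0) (f : W →ₗ[K] K)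
    (hf : ∀ l : List P, (∀ p ∈ l, Q p) → l.length ≤ Module.finrank K W - 1 →
      f (l.foldl (fun x p => L p x) x₀) = 0) :
    ∀ l : List P, (∀ p ∈ l, Q p) → f (l.foldl (fun x p => L p x) x₀) = 0 := by
  classical
  set N := Module.finrank K W with hN
  set run : List P → W := fun l => l.foldl (fun x p => L p x) x₀ with hrun
  have run_concat : ∀ (l : List P) (p : P), run (l.concat p) = L p (run l) := by
    intro l p
    simp [hrun, List.concat_eq_append, List.foldl_append]
  set R : ℕ → Set W := fun k => {x | ∃ l : List P, (∀ p ∈ l, Q p) ∧ l.length ≤ k ∧ run l = x}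
    with hR
  set V : ℕ → Submodule K W := fun k => Submodule.span K (R k) with hV
  have hRmono : ∀ {k m}, k ≤ m → R k ⊆ R m := by
    rintro k m hkm x ⟨l, hQ, hl, rfl⟩
    exact ⟨l, hQ, hl.trans hkm, rfl⟩
  have hVmono : ∀ {k m}, k ≤ m → V k ≤ V m := fun h => Submodule.span_mono (hRmono h)
  have hrunmem : ∀ (l : List P), (∀ p ∈ l, Q p) → ∀ {k}, l.length ≤ k → run l ∈ V k :=
    fun l hQ k hk => Submodule.subset_span ⟨l, hQ, hk, rfl⟩
  -- one step: L p maps V k into V (k+1)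
  have hLstep : ∀ (p : P), Q p → ∀ k, (V k).map (L p) ≤ V (k + 1) := by
    intro p hp k
    rw [hV, Submodule.map_span, Submodule.span_le]
    rintro _ ⟨x, ⟨l, hQ, hl, rfl⟩, rfl⟩
    rw [← run_concat l p]
    refine hrunmem _ ?_ ?_
    · intro q hq
      rw [List.concat_eq_append] at hq
      rcases List.mem_append.mp hq with h | h
      · exact hQ q h
      · simp only [List.mem_singleton] at h; simpa [h] using hp
    · simpa using Nat.succ_le_succ hl
  -- stabilization step
  have hstep : ∀ k, V k = V (k + 1) → V (k + 1) = V (k + 2) := by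
    intro k hk
    refine le_antisymm (hVmono (by omega)) ?_
    rw [hV, Submodule.span_le]
    rintro x ⟨l, hQ, hl, rfl⟩
    rcases List.eq_nil_or_concat l with rfl | ⟨l', p, rfl⟩
    · exact hrunmem [] (by simp) (by simp)
    · have hp : Q p := hQ p (by simp)
      have hQ' : ∀ q ∈ l', Q q := fun q hq => hQ q (by simp [hq])
      have hl' : l'.length ≤ k + 1 := by simpa using hl
      have h1 : run l' ∈ V k := hk ▸ hrunmem l' hQ' hl'
      have : run (l'.concat p) ∈ (V k).map (L p) := by
        rw [run_concat]; exact Submodule.mem_map_of_mem h1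
      exact hLstep p hp k this
  have hconst : ∀ k, V k = V (k + 1) → ∀ m, V (k + m) = V (k + m + 1) := by
    intro k hk m
    induction m with
    | zero => exact hk
    | succ n ih => exact hstep (k + n) ih
  have hstab : ∀ k, V k = V (k + 1) → ∀ m, k ≤ m → V m = V k := by
    intro k hk m hm
    obtain ⟨j, rfl⟩ := Nat.exists_eq_add_of_le hm
    induction j with
    | zero => rfl
    | succ n ih =>
      have := hconst k hk n
      rw [show k + (n+1) = k + n + 1 by ring, ← this]
      exact ih (by omega)
  -- find a stabilization point k < N
  have hx0V : x₀ ∈ V 0 := hrunmem [] (by simp) (by simp [hrun])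
  have hV0 : V 0 ≠ ⊥ := by
    intro h
    rw [h, Submodule.mem_bot] at hx0V
    exact hx₀ hx0V
  have hNpos : 1 ≤ N := by
    have : Module.finrank K ↥(V 0) ≤ N := Submodule.finrank_le _
    have h0 : Module.finrank K ↥(V 0) ≠ 0 := by
      exact fun h => hV0 (Submodule.finrank_eq_zero.mp h)
    omega
  have hfind : ∃ k, k < N ∧ V k = V (k + 1) := by
    by_contra hc
    push_neg at hc
    have hgrow : ∀ k, k ≤ N → k + 1 ≤ Module.finrank K ↥(V k) := by
      intro k hk
      induction k with
      | zero =>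
        have h0 : Module.finrank K ↥(V 0) ≠ 0 := by exact fun h => hV0 (Submodule.finrank_eq_zero.mp h)
        omega
      | succ n ih =>
        have hn : n < N := by omega
        have hlt : V n < V (n + 1) := lt_of_le_of_ne (hVmono (by omega)) (hc n hn)
        have := Submodule.finrank_lt_finrank_of_lt hlt
        have := ih (by omega)
        omega
    have h1 := hgrow N (le_refl _)
    have h2 : Module.finrank K ↥(V N) ≤ N := Submodule.finrank_le _
    omega
  obtain ⟨k, hkN, hkstab⟩ := hfind
  -- f vanishes on V (N - 1)
  have hker : V (N - 1) ≤ LinearMap.ker f := by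
    rw [hV, Submodule.span_le]
    rintro x ⟨l, hQ, hl, rfl⟩
    exact hf l hQ hl
  intro l hQ
  rcases Nat.lt_or_ge l.length N with h | h
  · exact hf l hQ (by omega)
  · have h1 : run l ∈ V l.length := hrunmem l hQ (le_refl _)
    have h2 : V l.length = V k := hstab k hkstab _ (by omega)
    have h3 : V (N - 1) = V k := hstab k hkstab _ (by omega)
    have : run l ∈ V (N - 1) := by rw [h3, ← h2]; exact h1
    exact hker this


/-- `stepP` as a linear map in `ρ`. -/
noncomputable def stepL {α β O : Type*} [Fintype α] [Fintype β] [DecidableEq β]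
    (U : Matrix (α × β) (α × β) ℂ) (M : O → Matrix α α ℂ)
    (φ : α → ℂ) (a : O) : Matrix β β ℂ →ₗ[ℂ] Matrix β β ℂ where
  toFun := stepP U M φ a
  map_add' ρ ρ' := by
    simp only [stepP, stepD, Matrix.kronecker_add, mul_add, add_mul]
    funext s t
    simp [ptraceIn, Finset.sum_add_distrib]
  map_smul' c ρ := by
    simp only [stepP, stepD, Matrix.kronecker_smul, Matrix.mul_smul, Matrix.smul_mul,
      RingHom.id_apply]
    funext s t
    simp [ptraceIn, Finset.mul_sum]

@[simp] lemma stepL_apply {α β O : Type*} [Fintype α] [Fintype β] [DecidableEq β]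
    (U : Matrix (α × β) (α × β) ℂ) (M : O → Matrix α α ℂ)
    (φ : α → ℂ) (a : O) (ρ : Matrix β β ℂ) :
    stepL U M φ a ρ = stepP U M φ a ρ := rfl

/-- Main theorem: two quantum Mealy machines with state-space dimensions `d₁, d₂` are
functionally equivalent iff they are `(d₁² + d₂² − 1)`-equivalent. -/
theorem equiv_iff_bounded_equiv (di d₁ d₂ : ℕ) (O : Type) [Fintype O]
    (U₁ : Matrix (Fin di × Fin d₁) (Fin di × Fin d₁) ℂ)
    (U₂ : Matrix (Fin di × Fin d₂) (Fin di × Fin d₂) ℂ)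
    (hU₁ : U₁ ∈ Matrix.unitaryGroup (Fin di × Fin d₁) ℂ)
    (hU₂ : U₂ ∈ Matrix.unitaryGroup (Fin di × Fin d₂) ℂ)
    (M : O → Matrix (Fin di) (Fin di) ℂ) (hM : ∑ a, (M a)ᴴ * M a = 1)
    (ρ₁ : Matrix (Fin d₁) (Fin d₁) ℂ) (ρ₂ : Matrix (Fin d₂) (Fin d₂) ℂ)
    (hρ₁ : ρ₁.PosSemidef) (ht₁ : ρ₁.trace = 1)
    (hρ₂ : ρ₂.PosSemidef) (ht₂ : ρ₂.trace = 1) :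
    (∀ l : List ((Fin di → ℂ) × O), (∀ p ∈ l, ∑ i, ‖p.1 i‖ ^ 2 = 1) →
        (runP U₁ M l ρ₁).trace = (runP U₂ M l ρ₂).trace) ↔
    (∀ l : List ((Fin di → ℂ) × O), (∀ p ∈ l, ∑ i, ‖p.1 i‖ ^ 2 = 1) →
        l.length ≤ d₁ ^ 2 + d₂ ^ 2 - 1 →
        (runP U₁ M l ρ₁).trace = (runP U₂ M l ρ₂).trace) := by
  constructor
  · exact fun h l hl _ => h l hl
  · intro h l hl
    classical
    have hfold : ∀ (l : List ((Fin di → ℂ) × O))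
        (x : Matrix (Fin d₁) (Fin d₁) ℂ × Matrix (Fin d₂) (Fin d₂) ℂ),
        l.foldl (fun x p => ((stepL U₁ M p.1 p.2).prodMap (stepL U₂ M p.1 p.2)) x) x
          = (runP U₁ M l x.1, runP U₂ M l x.2) := by
      intro l
      induction l with
      | nil => intro x; simp [runP]
      | cons p t ih =>
        intro x
        rw [List.foldl_cons, ih]
        simp [runP, LinearMap.prodMap_apply]
    have hrank : Module.finrank ℂ (Matrix (Fin d₁) (Fin d₁) ℂ × Matrix (Fin d₂) (Fin d₂) ℂ)
        = d₁ ^ 2 + d₂ ^ 2 := by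
      rw [Module.finrank_prod, Module.finrank_matrix, Module.finrank_matrix]
      simp [Fintype.card_fin]
      ring
    have hx0 : ((ρ₁, ρ₂) : Matrix (Fin d₁) (Fin d₁) ℂ × Matrix (Fin d₂) (Fin d₂) ℂ) ≠ 0 := by
      intro hc
      have h1 : ρ₁ = 0 := congrArg Prod.fst hc
      rw [h1] at ht₁
      simp at ht₁
    have key := key_stab (fun p : (Fin di → ℂ) × O =>
        (stepL U₁ M p.1 p.2).prodMap (stepL U₂ M p.1 p.2))
      (fun p => ∑ i, ‖p.1 i‖ ^ 2 = 1) (ρ₁, ρ₂) hx0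
      ((Matrix.traceLinearMap (Fin d₁) ℂ ℂ).comp (LinearMap.fst ℂ _ _) -
        (Matrix.traceLinearMap (Fin d₂) ℂ ℂ).comp (LinearMap.snd ℂ _ _)) ?_ l hl
    · rw [hfold] at key
      simpa [sub_eq_zero] using key
    · intro l' hl' hlen
      rw [hfold]
      rw [hrank] at hlen
      simpa [sub_eq_zero] using h l' hl' hlen
end
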